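/- Let L > 0, let m be a positive integer, and let f : [0, L] → ℝ be continuous with f(0) = f(L). Then there exists x ∈ [0, L - L/m] with f(x + L/m) = f(x). -/

import Mathlib

theorem universal_chord (L : ℝ) (hL : 0 < L) (m : ℕ) (hm : 0 < m) (f : ℝ → ℝ)
    (hf : ContinuousOn f (Set.Icc 0 L)) (hend : f 0 = f L) :
    ∃ x ∈ Set.Icc (0 : ℝ) (L - L / m), f (x + L / m) = f x := by
  set c := L / m with hc
  have hmpos : (0:ℝ) < m := Nat.cast_pos.mpr hm
  have hcpos : 0 < c := div_pos hL hmpos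
  have hmc : (m : ℝ) * c = L := by rw [hc]; field_simp [hmpos.ne']
  set g : ℝ → ℝ := fun x => f (x + c) - f x with hg
  have hsum : ∑ k ∈ Finset.range m, g (k * c) = 0 := by
    have h1 : ∀ k ∈ Finset.range m, g (k*c) = f ((k+1:ℕ)*c) - f (k*c) := by
      intro k _
      simp only [hg]
      push_cast
      ring_nf
    rw [Finset.sum_congr rfl h1, Finset.sum_range_sub (fun k => f (k*c)) m]
    simp [hmc, hend]
  have hmem : ∀ k : ℕ, k < m → (k:ℝ)*c ∈ Set.Icc (0:ℝ) (L - c) := by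
    intro k hk
    have hk1 : (k:ℝ) + 1 ≤ m := by exact_mod_cast hk
    constructor
    · positivity
    · nlinarith
  have hgc : ContinuousOn g (Set.Icc 0 (L - c)) := by
    apply ContinuousOn.sub
    · apply ContinuousOn.comp hf (continuous_add_right c).continuousOn
      intro x hx
      simp only [Set.mem_Icc]
      exact ⟨by linarith [hx.1, hcpos.le], by linarith [hx.2]⟩
    · exact hf.mono (fun x hx => ⟨hx.1, by linarith [hx.2, hcpos.le]⟩)
  obtain ⟨j, hj, hjle⟩ : ∃ j : ℕ, j < m ∧ g ((j:ℝ)*c) ≤ 0 := by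
    by_contra h
    push_neg at h
    have : 0 < ∑ k ∈ Finset.range m, g (k*c) :=
      Finset.sum_pos (fun k hk => h k (Finset.mem_range.mp hk)) ⟨0, Finset.mem_range.mpr hm⟩
    linarith
  obtain ⟨i, hi, hige⟩ : ∃ i : ℕ, i < m ∧ 0 ≤ g ((i:ℝ)*c) := by
    by_contra h
    push_neg at h
    have : ∑ k ∈ Finset.range m, g (k*c) < 0 :=
      Finset.sum_neg (fun k hk => h k (Finset.mem_range.mp hk)) ⟨0, Finset.mem_range.mpr hm⟩
    linarith
  have hsub : Set.uIcc ((i:ℝ)*c) ((j:ℝ)*c) ⊆ Set.Icc 0 (L - c) :=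
    Set.uIcc_subset_Icc (hmem i hi) (hmem j hj)
  have h0 : (0:ℝ) ∈ Set.uIcc (g ((i:ℝ)*c)) (g ((j:ℝ)*c)) := by
    rw [Set.mem_uIcc]; right; exact ⟨hjle, hige⟩
  obtain ⟨x, hx, hx0⟩ := intermediate_value_uIcc (hgc.mono hsub) h0
  refine ⟨x, hsub hx, ?_⟩
  simp only [hg] at hx0
  linarith [hx0]
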